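/- If M and N are strongly normalizing for βμμ'-reduction but the application (M N) is not strongly normalizing, then either M ▷* λy.P with P[y:=N] not strongly normalizing, or M ▷* μα.P with P[α=_r N] not strongly normalizing, or N ▷* μα.P with P[α=_l M] not strongly normalizing. -/

import Mathlib

/-- λμ-terms: variables, λ-abstraction, application, μ-abstraction, named term (α M). -/
inductive Trm : Type
  | var : ℕ → Trm
  | lam : ℕ → Trm → Trm
  | app : Trm → Trm → Trm
  | mu  : ℕ → Trm → Trm
  | mv  : ℕ → Trm → Trm
  deriving DecidableEq

namespace Trm

/-- Substitution M[x:=N]. -/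
def subst : Trm → ℕ → Trm → Trm
  | var y, x, N => if y = x then N else var y
  | lam y B, x, N => if y = x then lam y B else lam y (subst B x N)
  | app A B, x, N => app (subst A x N) (subst B x N)
  | mu a B, x, N => mu a (subst B x N)
  | mv a B, x, N => mv a (subst B x N)

/-- M[α=_r N]: replace each subterm (α U) by (α (U N)). -/
def rsub : Trm → ℕ → Trm → Trm
  | var y, _, _ => var y
  | lam y B, a, N => lam y (rsub B a N)
  | app A B, a, N => app (rsub A a N) (rsub B a N)
  | mu b B, a, N => if b = a then mu b B else mu b (rsub B a N)
  | mv b B, a, N => if b = a then mv b (app (rsub B a N) N) else mv b (rsub B a N)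

/-- M[α=_l N]: replace each subterm (α U) by (α (N U)). -/
def lsub : Trm → ℕ → Trm → Trm
  | var y, _, _ => var y
  | lam y B, a, N => lam y (lsub B a N)
  | app A B, a, N => app (lsub A a N) (lsub B a N)
  | mu b B, a, N => if b = a then mu b B else mu b (lsub B a N)
  | mv b B, a, N => if b = a then mv b (app N (lsub B a N)) else mv b (lsub B a N)

/-- One-step βμμ'-reduction (compatible closure). -/
inductive Red : Trm → Trm → Prop
  | beta (x M N) : Red (app (lam x M) N) (subst M x N)
  | muR (a M N) : Red (app (mu a M) N) (mu a (rsub M a N))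
  | muL (a M N) : Red (app M (mu a N)) (mu a (lsub N a M))
  | appL {M M'} (N) : Red M M' → Red (app M N) (app M' N)
  | appR (M) {N N'} : Red N N' → Red (app M N) (app M N')
  | lamC (x) {M M'} : Red M M' → Red (lam x M) (lam x M')
  | muC (a) {M M'} : Red M M' → Red (mu a M) (mu a M')
  | mvC (a) {M M'} : Red M M' → Red (mv a M) (mv a M')

/-- ▷*: reflexive transitive closure. -/
def Reds : Trm → Trm → Prop := Relation.ReflTransGen Red

/-- Strong normalization: no infinite reduction sequence. -/
def SN (M : Trm) : Prop := Acc (fun a b => Red b a) M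

/-- Left-nested application (h M₁ ... Mₙ). -/
def appList (h : Trm) (l : List Trm) : Trm := l.foldl app h

end Trm

open Trm

namespace Trm

lemma reds_appL {M M'} (N) (h : Reds M M') : Reds (app M N) (app M' N) :=
  Relation.ReflTransGen.lift (fun t => app t N) (fun _ _ h => Red.appL N h) _ _ h

lemma reds_appR (M) {N N'} (h : Reds N N') : Reds (app M N) (app M N') :=
  Relation.ReflTransGen.lift (fun t => app M t) (fun _ _ h => Red.appR M h) _ _ h

lemma reds_lamC (x) {M M'} (h : Reds M M') : Reds (lam x M) (lam x M') :=
  Relation.ReflTransGen.lift (fun t => lam x t) (fun _ _ h => Red.lamC x h) _ _ h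

lemma reds_muC (a) {M M'} (h : Reds M M') : Reds (mu a M) (mu a M') :=
  Relation.ReflTransGen.lift (fun t => mu a t) (fun _ _ h => Red.muC a h) _ _ h

lemma reds_mvC (a) {M M'} (h : Reds M M') : Reds (mv a M) (mv a M') :=
  Relation.ReflTransGen.lift (fun t => mv a t) (fun _ _ h => Red.mvC a h) _ _ h

lemma SN.reds {X Y} (h : SN X) (r : Reds X Y) : SN Y := by
  induction r with
  | refl => exact h
  | tail _ s ih => exact Acc.inv ih s

lemma subst_reds (P : Trm) (y : ℕ) {N N'} (h : Red N N') :
    Reds (subst P y N) (subst P y N') := by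
  induction P with
  | var z =>
    simp only [subst]
    split
    · exact Relation.ReflTransGen.single h
    · exact Relation.ReflTransGen.refl
  | lam z B ih =>
    simp only [subst]
    split
    · exact Relation.ReflTransGen.refl
    · exact reds_lamC z ih
  | app A B ihA ihB =>
    simp only [subst]
    exact (reds_appL _ ihA).trans (reds_appR _ ihB)
  | mu b B ih => simp only [subst]; exact reds_muC b ih
  | mv b B ih => simp only [subst]; exact reds_mvC b ih

lemma rsub_reds (P : Trm) (a : ℕ) {N N'} (h : Red N N') :
    Reds (rsub P a N) (rsub P a N') := by
  induction P with
  | var z => exact Relation.ReflTransGen.refl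
  | lam z B ih => simp only [rsub]; exact reds_lamC z ih
  | app A B ihA ihB =>
    simp only [rsub]
    exact (reds_appL _ ihA).trans (reds_appR _ ihB)
  | mu b B ih =>
    simp only [rsub]
    split
    · exact Relation.ReflTransGen.refl
    · exact reds_muC b ih
  | mv b B ih =>
    simp only [rsub]
    split
    · exact reds_mvC b ((reds_appL _ ih).trans (reds_appR _ (Relation.ReflTransGen.single h)))
    · exact reds_mvC b ih

lemma lsub_reds (P : Trm) (a : ℕ) {N N'} (h : Red N N') :
    Reds (lsub P a N) (lsub P a N') := by
  induction P with
  | var z => exact Relation.ReflTransGen.refl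
  | lam z B ih => simp only [lsub]; exact reds_lamC z ih
  | app A B ihA ihB =>
    simp only [lsub]
    exact (reds_appL _ ihA).trans (reds_appR _ ihB)
  | mu b B ih =>
    simp only [lsub]
    split
    · exact Relation.ReflTransGen.refl
    · exact reds_muC b ih
  | mv b B ih =>
    simp only [lsub]
    split
    · exact reds_mvC b ((reds_appL _ (Relation.ReflTransGen.single h)).trans (reds_appR _ ih))
    · exact reds_mvC b ih

lemma SN.mu {Q : Trm} (a : ℕ) (h : SN Q) : SN (mu a Q) := by
  induction h with
  | intro Q _ ih =>
    refine Acc.intro _ (fun X hX => ?_)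
    cases hX with
    | muC a s => exact ih _ s

end Trm

theorem app_not_sn {M N : Trm} (hM : SN M) (hN : SN N) (h : ¬ SN (app M N)) :
    (∃ (y : ℕ) (P : Trm), Reds M (lam y P) ∧ ¬ SN (subst P y N)) ∨
    (∃ (a : ℕ) (P : Trm), Reds M (mu a P) ∧ ¬ SN (rsub P a N)) ∨
    (∃ (a : ℕ) (P : Trm), Reds N (mu a P) ∧ ¬ SN (lsub P a M)) := by
  induction hM generalizing N with
  | intro M hMacc ihM =>
    induction hN with
    | intro N hNacc ihN =>
      obtain ⟨X, hX, hns⟩ : ∃ X, Red (app M N) X ∧ ¬ SN X := by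
        by_contra hc
        push_neg at hc
        exact h (Acc.intro _ (fun X hX => hc X hX))
      cases hX with
      | beta x P => exact Or.inl ⟨x, P, Relation.ReflTransGen.refl, hns⟩
      | muR a P => exact Or.inr (Or.inl ⟨a, P, Relation.ReflTransGen.refl,
          fun s => hns (SN.mu a s)⟩)
      | muL a _ P => exact Or.inr (Or.inr ⟨a, P, Relation.ReflTransGen.refl,
          fun s => hns (SN.mu a s)⟩)
      | appL _ hstep =>
        rename_i M'
        rcases ihM M' hstep (Acc.intro N hNacc) hns with
          ⟨y, P, hr, hp⟩ | ⟨a, P, hr, hp⟩ | ⟨a, P, hr, hp⟩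
        · exact Or.inl ⟨y, P, Relation.ReflTransGen.head hstep hr, hp⟩
        · exact Or.inr (Or.inl ⟨a, P, Relation.ReflTransGen.head hstep hr, hp⟩)
        · exact Or.inr (Or.inr ⟨a, P, hr,
            fun s => hp (SN.reds s (lsub_reds P a hstep))⟩)
      | appR _ hstep =>
        rename_i N'
        rcases ihN N' hstep hns with
          ⟨y, P, hr, hp⟩ | ⟨a, P, hr, hp⟩ | ⟨a, P, hr, hp⟩
        · exact Or.inl ⟨y, P, hr,
            fun s => hp (SN.reds s (subst_reds P y hstep))⟩
        · exact Or.inr (Or.inl ⟨a, P, hr,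
            fun s => hp (SN.reds s (rsub_reds P a hstep))⟩)
        · exact Or.inr (Or.inr ⟨a, P, Relation.ReflTransGen.head hstep hr, hp⟩)
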